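/- Let (ξ_n)_{n∈ℤ} be a stationary Markov chain and f ∈ L²_0(π). Then the sequence (‖E(S_n|ξ_n)‖)_{n≥1} is subadditive: for all positive integers m and n, ‖E(S_{n+m}|ξ_{n+m})‖ ≤ ‖E(S_n|ξ_n)‖ + ‖E(S_m|ξ_m)‖. -/

import Mathlib

open MeasureTheory ProbabilityTheory Filter
open scoped ENNReal NNReal Topology

noncomputable section

/-- The σ-algebra generated by the random variables `ξ k`, `k ∈ I`. -/
def sigmaOf {Ω S : Type*} [MeasurableSpace S] (ξ : ℤ → Ω → S) (I : Set ℤ) :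
    MeasurableSpace Ω :=
  ⨆ k ∈ I, MeasurableSpace.comap (ξ k) inferInstance

/-- The σ-algebra generated by the pair `(ξ i, ξ j)`. -/
def pairSigma {Ω S : Type*} [MeasurableSpace S] (ξ : ℤ → Ω → S) (i j : ℤ) :
    MeasurableSpace Ω :=
  MeasurableSpace.comap (ξ i) inferInstance ⊔ MeasurableSpace.comap (ξ j) inferInstance

/-- Conditional independence of the σ-algebras `m₁` and `m₂` given `m'`. -/
def CondIndepGiven {Ω : Type*} [MeasurableSpace Ω] (μ : Measure Ω)
    (m' m₁ m₂ : MeasurableSpace Ω) : Prop :=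
  ∀ A B : Set Ω, MeasurableSet[m₁] A → MeasurableSet[m₂] B →
    μ[(A ∩ B).indicator (fun _ => (1 : ℝ)) | m'] =ᵐ[μ]
      fun ω => (μ[A.indicator (fun _ => (1 : ℝ)) | m']) ω *
        (μ[B.indicator (fun _ => (1 : ℝ)) | m']) ω

/-- Markov property: for every `n`, the past `σ(ξ k, k ≤ n)` and the future
`σ(ξ k, k ≥ n)` are conditionally independent given `σ(ξ n)`. -/
def IsMarkovChain {Ω S : Type*} [MeasurableSpace Ω] [MeasurableSpace S]
    (μ : Measure Ω) (ξ : ℤ → Ω → S) : Prop :=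
  ∀ n : ℤ, CondIndepGiven μ (MeasurableSpace.comap (ξ n) inferInstance)
    (sigmaOf ξ {k | k ≤ n}) (sigmaOf ξ {k | n ≤ k})

/-- Stationarity: `(ξ (n+1))_n` has the same law as `(ξ n)_n`. -/
def IsStationaryZ {Ω S : Type*} [MeasurableSpace Ω] [MeasurableSpace S]
    (μ : Measure Ω) (ξ : ℤ → Ω → S) : Prop :=
  Measure.map (fun ω (n : ℤ) => ξ (n + 1) ω) μ = Measure.map (fun ω (n : ℤ) => ξ n ω) μ

/-- The left shift on path space `S^ℤ`. -/
def shiftZ {S : Type*} (x : ℤ → S) : ℤ → S := fun n => x (n + 1)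

/-- Total ergodicity: every iterate of the shift is ergodic for the law of the chain. -/
def TotallyErgodic {Ω S : Type*} [MeasurableSpace Ω] [MeasurableSpace S]
    (μ : Measure Ω) (ξ : ℤ → Ω → S) : Prop :=
  ∀ k : ℕ, 0 < k → Ergodic (shiftZ^[k]) (Measure.map (fun ω (n : ℤ) => ξ n ω) μ)

/-- Partial sums `S_n = f(ξ 1) + ⋯ + f(ξ n)`. -/
def pS {Ω S : Type*} (ξ : ℤ → Ω → S) (f : S → ℝ) (n : ℕ) (ω : Ω) : ℝ :=
  ∑ i ∈ Finset.Icc 1 n, f (ξ (i : ℤ) ω)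

/-- Convergence in distribution (weak convergence of the laws) of real random
variables to the measure `ν`. -/
def TendstoInDistribution {Ω : Type*} [MeasurableSpace Ω] (μ : Measure Ω)
    (Y : ℕ → Ω → ℝ) (ν : Measure ℝ) : Prop :=
  ∀ g : BoundedContinuousFunction ℝ ℝ,
    Tendsto (fun n => ∫ ω, g (Y n ω) ∂μ) atTop (𝓝 (∫ x, g x ∂ν))


/-! ### Auxiliary lemmas -/

section Aux
open MeasurableSpace

lemma my_indicator_one_bdd {Ω : Type*} {m0 : MeasurableSpace Ω} {μ : Measure Ω} (B : Set Ω) :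
    ∀ᵐ ω ∂μ, |B.indicator (fun _ => (1:ℝ)) ω| ≤ ((1:ℝ≥0) : ℝ) := by
  refine Filter.Eventually.of_forall fun x => ?_
  by_cases hx : x ∈ B <;> simp [hx]

lemma my_condexp_indicator_bdd {Ω : Type*} {m m0 : MeasurableSpace Ω} {μ : Measure Ω}
    (B : Set Ω) : ∀ᵐ ω ∂μ, ‖(μ[B.indicator (fun _ => (1:ℝ)) | m]) ω‖ ≤ 1 := by
  have := ae_bdd_condExp_of_ae_bdd (m := m) (my_indicator_one_bdd (μ := μ) B)
  simpa [Real.norm_eq_abs] using this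

lemma my_condexp_ae_eq_condexpL2 {Ω : Type*} {m m0 : MeasurableSpace Ω} {μ : Measure Ω}
    [IsProbabilityMeasure μ] (hm : m ≤ m0) {g : Ω → ℝ} (hg : MemLp g 2 μ) :
    μ[g|m] =ᵐ[μ] (condExpL2 ℝ ℝ hm (hg.toLp g) : Ω → ℝ) := by
  refine (ae_eq_condExp_of_forall_setIntegral_eq hm (hg.integrable one_le_two)
    (fun s _ _ => (integrable_condExpL2_of_isFiniteMeasure hm).integrableOn)
    (fun s hs hμs => ?_) (aestronglyMeasurable_condExpL2 hm _)).symm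
  rw [integral_condExpL2_eq hm _ hs hμs.ne]
  exact setIntegral_congr_ae (hm s hs) ((MemLp.coeFn_toLp hg).mono fun x hx _ => hx)

lemma my_memℒp_condexp {Ω : Type*} {m m0 : MeasurableSpace Ω} {μ : Measure Ω}
    [IsProbabilityMeasure μ] (hm : m ≤ m0) {g : Ω → ℝ} (hg : MemLp g 2 μ) :
    MemLp (μ[g|m]) 2 μ :=
  (Lp.memLp _).ae_eq (my_condexp_ae_eq_condexpL2 hm hg).symm

lemma my_eLpNorm_condexp_le {Ω : Type*} {m m0 : MeasurableSpace Ω} {μ : Measure Ω}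
    [IsProbabilityMeasure μ] (hm : m ≤ m0) {g : Ω → ℝ} (hg : MemLp g 2 μ) :
    eLpNorm (μ[g|m]) 2 μ ≤ eLpNorm g 2 μ := by
  calc eLpNorm (μ[g|m]) 2 μ
      = eLpNorm ((condExpL2 ℝ ℝ hm (hg.toLp g) : Ω → ℝ)) 2 μ :=
        eLpNorm_congr_ae (my_condexp_ae_eq_condexpL2 hm hg)
    _ ≤ eLpNorm (hg.toLp g : Ω → ℝ) 2 μ := eLpNorm_condExpL2_le hm _
    _ = eLpNorm g 2 μ := eLpNorm_congr_ae hg.coeFn_toLp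

lemma my_condexp_map {Ω : Type*} {m0 : MeasurableSpace Ω} {μ : Measure Ω}
    {β : Type*} {𝒢 mβ : MeasurableSpace β} [IsProbabilityMeasure μ]
    {T : Ω → β} (hT : Measurable T) (h𝒢 : 𝒢 ≤ mβ)
    {g : β → ℝ} (hg : Integrable g (Measure.map T μ)) :
    (fun ω => ((Measure.map T μ)[g|𝒢]) (T ω)) =ᵐ[μ] μ[fun ω => g (T ω) | 𝒢.comap T] := by
  have : IsProbabilityMeasure (Measure.map T μ) := Measure.isProbabilityMeasure_map hT.aemeasurable
  have hcle : 𝒢.comap T ≤ m0 := (MeasurableSpace.comap_mono h𝒢).trans hT.comap_le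
  have hcond_meas : AEStronglyMeasurable ((Measure.map T μ)[g|𝒢]) (Measure.map T μ) :=
    (stronglyMeasurable_condExp.mono h𝒢).aestronglyMeasurable
  refine ae_eq_condExp_of_forall_setIntegral_eq hcle
    ((integrable_map_measure hg.aestronglyMeasurable hT.aemeasurable).mp hg)
    (fun s _ _ => ((integrable_map_measure hcond_meas hT.aemeasurable).mp
      integrable_condExp).integrableOn) (fun s hs _ => ?_) ?_
  · obtain ⟨t, ht, rfl⟩ := hs
    calc ∫ x in T ⁻¹' t, ((Measure.map T μ)[g|𝒢]) (T x) ∂μ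
        = ∫ y in t, ((Measure.map T μ)[g|𝒢]) y ∂(Measure.map T μ) :=
          (setIntegral_map (h𝒢 t ht) hcond_meas hT.aemeasurable).symm
      _ = ∫ y in t, g y ∂(Measure.map T μ) := setIntegral_condExp h𝒢 hg ht
      _ = ∫ x in T ⁻¹' t, g (T x) ∂μ :=
          setIntegral_map (h𝒢 t ht) hg.aestronglyMeasurable hT.aemeasurable
  · exact StronglyMeasurable.aestronglyMeasurable
      (stronglyMeasurable_condExp.comp_measurable (Measurable.of_comap_le le_rfl))

lemma my_eLpNorm_condexp_map {Ω : Type*} {m0 : MeasurableSpace Ω} {μ : Measure Ω}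
    {β : Type*} {𝒢 mβ : MeasurableSpace β} [IsProbabilityMeasure μ]
    {T : Ω → β} (hT : Measurable T) (h𝒢 : 𝒢 ≤ mβ)
    {g : β → ℝ} (hg : Integrable g (Measure.map T μ)) :
    eLpNorm (μ[fun ω => g (T ω) | 𝒢.comap T]) 2 μ
      = eLpNorm ((Measure.map T μ)[g|𝒢]) 2 (Measure.map T μ) := by
  rw [← eLpNorm_congr_ae (my_condexp_map hT h𝒢 hg),
    eLpNorm_map_measure ((stronglyMeasurable_condExp.mono h𝒢).aestronglyMeasurable)
      hT.aemeasurable]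
  rfl

variable {Ω S : Type*} [m0 : MeasurableSpace Ω] [MeasurableSpace S]
  {μ : Measure Ω} [IsProbabilityMeasure μ] {ξ : ℤ → Ω → S}

omit [IsProbabilityMeasure μ] in
lemma my_sigmaOf_le (hmeas : ∀ n, Measurable (ξ n)) (I : Set ℤ) : sigmaOf ξ I ≤ m0 :=
  iSup₂_le fun k _ => (hmeas k).comap_le

omit m0 [IsProbabilityMeasure μ] in
lemma my_comap_le_sigmaOf {I : Set ℤ} {k : ℤ} (hk : k ∈ I) :
    MeasurableSpace.comap (ξ k) inferInstance ≤ sigmaOf ξ I :=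
  le_biSup (fun k => MeasurableSpace.comap (ξ k) inferInstance) hk

omit m0 [IsProbabilityMeasure μ] in
lemma my_indicator_mul_indicator_one (s : Set Ω) (Y : Ω → ℝ) :
    s.indicator Y = fun x => Y x * s.indicator (fun _ => (1:ℝ)) x := by
  funext x; by_cases hx : x ∈ s <;> simp [hx]

/-- `E(1_B | past) = E(1_B | ξ_N)` for future-measurable sets `B`. -/
lemma my_markov_condexp_indicator (hmeas : ∀ n, Measurable (ξ n))
    (hmarkov : IsMarkovChain μ ξ)
    (N : ℤ) {B : Set Ω} (hB : MeasurableSet[sigmaOf ξ {k | N ≤ k}] B) :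
    μ[B.indicator (fun _ => (1:ℝ)) | MeasurableSpace.comap (ξ N) inferInstance]
      =ᵐ[μ] μ[B.indicator (fun _ => (1:ℝ)) | sigmaOf ξ {k | k ≤ N}] := by
  have hpast_le : sigmaOf ξ {k | k ≤ N} ≤ m0 := my_sigmaOf_le hmeas _
  have hfut_le : sigmaOf ξ {k | N ≤ k} ≤ m0 := my_sigmaOf_le hmeas _
  have hm₁_le : MeasurableSpace.comap (ξ N) inferInstance ≤ m0 := (hmeas N).comap_le
  have hm₁_past : MeasurableSpace.comap (ξ N) inferInstance ≤ sigmaOf ξ {k | k ≤ N} :=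
    my_comap_le_sigmaOf (le_refl N)
  have hBmeas : MeasurableSet B := hfut_le _ hB
  have intB : Integrable (B.indicator fun _ => (1:ℝ)) μ := (integrable_const 1).indicator hBmeas
  refine ae_eq_condExp_of_forall_setIntegral_eq hpast_le intB
    (fun s _ _ => integrable_condExp.integrableOn) (fun s hs _ => ?_)
    ((stronglyMeasurable_condExp.mono hm₁_past).aestronglyMeasurable)
  have hsmeas : MeasurableSet s := hpast_le _ hs
  have ints : Integrable (s.indicator fun _ => (1:ℝ)) μ := (integrable_const 1).indicator hsmeas
  have hW_bdd := my_condexp_indicator_bdd (μ := μ)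
    (m := MeasurableSpace.comap (ξ N) inferInstance) B
  have hpull : μ[(fun x => (μ[B.indicator (fun _ => (1:ℝ)) |
        MeasurableSpace.comap (ξ N) inferInstance]) x * s.indicator (fun _ => (1:ℝ)) x) |
        MeasurableSpace.comap (ξ N) inferInstance] =ᵐ[μ]
      fun x => (μ[B.indicator (fun _ => (1:ℝ)) | MeasurableSpace.comap (ξ N) inferInstance]) x *
        (μ[s.indicator (fun _ => (1:ℝ)) | MeasurableSpace.comap (ξ N) inferInstance]) x :=
    condExp_stronglyMeasurable_mul_of_bound hm₁_le stronglyMeasurable_condExp ints 1 hW_bdd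
  have intWs : Integrable (fun x => (μ[B.indicator (fun _ => (1:ℝ)) |
      MeasurableSpace.comap (ξ N) inferInstance]) x * s.indicator (fun _ => (1:ℝ)) x) μ :=
    Integrable.bdd_mul ints (stronglyMeasurable_condExp.mono hm₁_le).aestronglyMeasurable hW_bdd
  calc ∫ x in s, (μ[B.indicator (fun _ => (1:ℝ)) |
          MeasurableSpace.comap (ξ N) inferInstance]) x ∂μ
      = ∫ x, (fun x => (μ[B.indicator (fun _ => (1:ℝ)) |
          MeasurableSpace.comap (ξ N) inferInstance]) x * s.indicator (fun _ => (1:ℝ)) x) x ∂μ := by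
        rw [← integral_indicator hsmeas, my_indicator_mul_indicator_one]
    _ = ∫ x, (μ[(fun x => (μ[B.indicator (fun _ => (1:ℝ)) |
          MeasurableSpace.comap (ξ N) inferInstance]) x * s.indicator (fun _ => (1:ℝ)) x) |
          MeasurableSpace.comap (ξ N) inferInstance]) x ∂μ :=
        (integral_condExp hm₁_le).symm
    _ = ∫ x, (μ[B.indicator (fun _ => (1:ℝ)) | MeasurableSpace.comap (ξ N) inferInstance]) x *
          (μ[s.indicator (fun _ => (1:ℝ)) | MeasurableSpace.comap (ξ N) inferInstance]) x ∂μ :=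
        integral_congr_ae hpull
    _ = ∫ x, (μ[s.indicator (fun _ => (1:ℝ)) | MeasurableSpace.comap (ξ N) inferInstance]) x *
          (μ[B.indicator (fun _ => (1:ℝ)) | MeasurableSpace.comap (ξ N) inferInstance]) x ∂μ := by
        simp_rw [mul_comm]
    _ = ∫ x, (μ[(s ∩ B).indicator (fun _ => (1:ℝ)) |
          MeasurableSpace.comap (ξ N) inferInstance]) x ∂μ :=
        (integral_congr_ae (hmarkov N s B hs hB)).symm
    _ = ∫ x, (s ∩ B).indicator (fun _ => (1:ℝ)) x ∂μ := integral_condExp hm₁_le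
    _ = ∫ x in s, B.indicator (fun _ => (1:ℝ)) x ∂μ := by
        rw [← integral_indicator hsmeas, Set.indicator_indicator]

/-- `∫ Y·1_B = ∫ Y·E(1_B|ξ_N)` for past-measurable integrable `Y` and future sets `B`. -/
lemma my_markov_integral_mul_indicator (hmeas : ∀ n, Measurable (ξ n))
    (hmarkov : IsMarkovChain μ ξ) (N : ℤ) {Y : Ω → ℝ} (hY : Integrable Y μ)
    (hYm : StronglyMeasurable[sigmaOf ξ {k | k ≤ N}] Y)
    {B : Set Ω} (hB : MeasurableSet[sigmaOf ξ {k | N ≤ k}] B) :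
    ∫ ω, Y ω * B.indicator (fun _ => (1:ℝ)) ω ∂μ
      = ∫ ω, Y ω * (μ[B.indicator (fun _ => (1:ℝ)) |
          MeasurableSpace.comap (ξ N) inferInstance]) ω ∂μ := by
  have hpast_le : sigmaOf ξ {k | k ≤ N} ≤ m0 := my_sigmaOf_le hmeas _
  have hfut_le : sigmaOf ξ {k | N ≤ k} ≤ m0 := my_sigmaOf_le hmeas _
  have hBmeas : MeasurableSet B := hfut_le _ hB
  have intB : Integrable (B.indicator fun _ => (1:ℝ)) μ := (integrable_const 1).indicator hBmeas
  have intYB : Integrable (fun ω => Y ω * B.indicator (fun _ => (1:ℝ)) ω) μ := by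
    have h := Integrable.bdd_mul (c := 1) (f := B.indicator fun _ => (1:ℝ)) (g := Y) hY
      (((stronglyMeasurable_const (b := (1:ℝ))).indicator hBmeas).aestronglyMeasurable)
      (by simpa [Real.norm_eq_abs] using my_indicator_one_bdd (μ := μ) B)
    exact h.congr (Filter.Eventually.of_forall fun x =>
      mul_comm (B.indicator (fun _ => (1:ℝ)) x) (Y x))
  have hmul : μ[(fun ω => Y ω * B.indicator (fun _ => (1:ℝ)) ω) | sigmaOf ξ {k | k ≤ N}]
      =ᵐ[μ] fun ω => Y ω * (μ[B.indicator (fun _ => (1:ℝ)) | sigmaOf ξ {k | k ≤ N}]) ω :=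
    condExp_mul_of_stronglyMeasurable_left hYm intYB intB
  calc ∫ ω, Y ω * B.indicator (fun _ => (1:ℝ)) ω ∂μ
      = ∫ ω, (μ[(fun ω => Y ω * B.indicator (fun _ => (1:ℝ)) ω) |
          sigmaOf ξ {k | k ≤ N}]) ω ∂μ := (integral_condExp hpast_le).symm
    _ = ∫ ω, Y ω * (μ[B.indicator (fun _ => (1:ℝ)) | sigmaOf ξ {k | k ≤ N}]) ω ∂μ :=
        integral_congr_ae hmul
    _ = ∫ ω, Y ω * (μ[B.indicator (fun _ => (1:ℝ)) |
          MeasurableSpace.comap (ξ N) inferInstance]) ω ∂μ := by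
        refine integral_congr_ae ?_
        filter_upwards [my_markov_condexp_indicator hmeas hmarkov N hB] with ω hω
        rw [← hω]

/-- Tower identity `E(X|ξ_M) = E(E(X|ξ_N)|ξ_M)` for past-measurable `X` and `N ≤ M`. -/
lemma my_markov_condexp_tower (hmeas : ∀ n, Measurable (ξ n)) (hmarkov : IsMarkovChain μ ξ)
    (N M : ℤ) (hNM : N ≤ M) {X : Ω → ℝ} (hX : Integrable X μ)
    (hXm : StronglyMeasurable[sigmaOf ξ {k | k ≤ N}] X) :
    μ[X | MeasurableSpace.comap (ξ M) inferInstance] =ᵐ[μ]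
      μ[μ[X | MeasurableSpace.comap (ξ N) inferInstance] |
        MeasurableSpace.comap (ξ M) inferInstance] := by
  have hpast_le : sigmaOf ξ {k | k ≤ N} ≤ m0 := my_sigmaOf_le hmeas _
  have hm₁_le : MeasurableSpace.comap (ξ N) inferInstance ≤ m0 := (hmeas N).comap_le
  have hm₂_le : MeasurableSpace.comap (ξ M) inferInstance ≤ m0 := (hmeas M).comap_le
  have hm₁_past : MeasurableSpace.comap (ξ N) inferInstance ≤ sigmaOf ξ {k | k ≤ N} :=
    my_comap_le_sigmaOf (le_refl N)
  have hm₂_fut : MeasurableSpace.comap (ξ M) inferInstance ≤ sigmaOf ξ {k | N ≤ k} :=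
    my_comap_le_sigmaOf hNM
  have hW_bdd := my_condexp_indicator_bdd (μ := μ)
    (m := MeasurableSpace.comap (ξ N) inferInstance)
  refine (ae_eq_condExp_of_forall_setIntegral_eq hm₂_le hX
    (fun s _ _ => integrable_condExp.integrableOn) (fun s hs _ => ?_)
    (stronglyMeasurable_condExp.aestronglyMeasurable)).symm
  have hsfut : MeasurableSet[sigmaOf ξ {k | N ≤ k}] s := hm₂_fut s hs
  have hsmeas : MeasurableSet s := hm₂_le s hs
  have hpull : μ[(fun ω => (μ[s.indicator (fun _ => (1:ℝ)) |
        MeasurableSpace.comap (ξ N) inferInstance]) ω * X ω) |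
        MeasurableSpace.comap (ξ N) inferInstance] =ᵐ[μ]
      fun ω => (μ[s.indicator (fun _ => (1:ℝ)) | MeasurableSpace.comap (ξ N) inferInstance]) ω *
        (μ[X | MeasurableSpace.comap (ξ N) inferInstance]) ω :=
    condExp_stronglyMeasurable_mul_of_bound hm₁_le stronglyMeasurable_condExp hX 1 (hW_bdd s)
  have intWX : Integrable (fun ω => (μ[s.indicator (fun _ => (1:ℝ)) |
      MeasurableSpace.comap (ξ N) inferInstance]) ω * X ω) μ :=
    Integrable.bdd_mul hX (stronglyMeasurable_condExp.mono hm₁_le).aestronglyMeasurable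
      (hW_bdd s)
  calc ∫ ω in s, (μ[μ[X | MeasurableSpace.comap (ξ N) inferInstance] |
          MeasurableSpace.comap (ξ M) inferInstance]) ω ∂μ
      = ∫ ω in s, (μ[X | MeasurableSpace.comap (ξ N) inferInstance]) ω ∂μ :=
        setIntegral_condExp hm₂_le integrable_condExp hs
    _ = ∫ ω, (μ[X | MeasurableSpace.comap (ξ N) inferInstance]) ω *
          s.indicator (fun _ => (1:ℝ)) ω ∂μ := by
        rw [← integral_indicator hsmeas, my_indicator_mul_indicator_one]
    _ = ∫ ω, (μ[X | MeasurableSpace.comap (ξ N) inferInstance]) ω *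
          (μ[s.indicator (fun _ => (1:ℝ)) | MeasurableSpace.comap (ξ N) inferInstance]) ω ∂μ :=
        my_markov_integral_mul_indicator hmeas hmarkov N integrable_condExp
          (stronglyMeasurable_condExp.mono hm₁_past) hsfut
    _ = ∫ ω, (μ[s.indicator (fun _ => (1:ℝ)) | MeasurableSpace.comap (ξ N) inferInstance]) ω *
          (μ[X | MeasurableSpace.comap (ξ N) inferInstance]) ω ∂μ := by simp_rw [mul_comm]
    _ = ∫ ω, (μ[(fun ω => (μ[s.indicator (fun _ => (1:ℝ)) |
          MeasurableSpace.comap (ξ N) inferInstance]) ω * X ω) |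
          MeasurableSpace.comap (ξ N) inferInstance]) ω ∂μ := (integral_congr_ae hpull).symm
    _ = ∫ ω, (μ[s.indicator (fun _ => (1:ℝ)) |
          MeasurableSpace.comap (ξ N) inferInstance]) ω * X ω ∂μ := integral_condExp hm₁_le
    _ = ∫ ω, X ω * (μ[s.indicator (fun _ => (1:ℝ)) |
          MeasurableSpace.comap (ξ N) inferInstance]) ω ∂μ := by simp_rw [mul_comm]
    _ = ∫ ω, X ω * s.indicator (fun _ => (1:ℝ)) ω ∂μ :=
        (my_markov_integral_mul_indicator hmeas hmarkov N hX hXm hsfut).symm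
    _ = ∫ ω in s, X ω ∂μ := by
        rw [← integral_indicator hsmeas]
        exact integral_congr_ae (Filter.Eventually.of_forall fun x =>
          (congrFun (my_indicator_mul_indicator_one s X) x).symm)

omit m0 [IsProbabilityMeasure μ] in
lemma my_shiftZ_measurable : Measurable (shiftZ (S := S)) :=
  measurable_pi_lambda _ fun n => measurable_pi_apply (n + 1)

lemma my_shiftZ_iterate_apply {S' : Type*} (n : ℕ) (x : ℤ → S') (i : ℤ) :
    (shiftZ^[n]) x i = x (i + n) := by
  induction n generalizing x i with
  | zero => simp
  | succ k ih =>
    rw [Function.iterate_succ_apply, ih]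
    show x (i + k + 1) = x (i + (k + 1 : ℕ))
    congr 1
    push_cast
    ring

omit [IsProbabilityMeasure μ] in
lemma my_path_measurable (hmeas : ∀ n, Measurable (ξ n)) :
    Measurable (fun ω (n : ℤ) => ξ n ω) :=
  measurable_pi_lambda _ hmeas

omit [IsProbabilityMeasure μ] in
lemma my_shift_measurePreserving (hmeas : ∀ n, Measurable (ξ n)) (hstat : IsStationaryZ μ ξ) :
    MeasurePreserving shiftZ (Measure.map (fun ω (n : ℤ) => ξ n ω) μ)
      (Measure.map (fun ω (n : ℤ) => ξ n ω) μ) := by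
  refine ⟨my_shiftZ_measurable, ?_⟩
  rw [Measure.map_map my_shiftZ_measurable (my_path_measurable hmeas)]
  exact hstat

omit [IsProbabilityMeasure μ] in
/-- Marginals of a stationary chain all coincide. -/
lemma my_marginal_map_eq (hmeas : ∀ n, Measurable (ξ n)) (hstat : IsStationaryZ μ ξ) (i : ℤ) :
    Measure.map (ξ i) μ = Measure.map (ξ 0) μ := by
  have hΦ := my_path_measurable hmeas
  have hpres := my_shift_measurePreserving hmeas hstat
  have hproj : ∀ j : ℤ, Measure.map (ξ j) μ
      = Measure.map (fun x : ℤ → S => x j) (Measure.map (fun ω (n : ℤ) => ξ n ω) μ) := by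
    intro j
    rw [Measure.map_map (measurable_pi_apply j) hΦ]
    rfl
  have hstep : ∀ j : ℤ, Measure.map (fun x : ℤ → S => x j)
        (Measure.map (fun ω (n : ℤ) => ξ n ω) μ)
      = Measure.map (fun x : ℤ → S => x (j + 1))
        (Measure.map (fun ω (n : ℤ) => ξ n ω) μ) := by
    intro j
    conv_lhs => rw [← hpres.map_eq]
    rw [Measure.map_map (measurable_pi_apply j) my_shiftZ_measurable]
    rfl
  rw [hproj i, hproj 0]
  induction i using Int.induction_on with
  | zero => rfl
  | succ k ih => rw [← hstep k, ih]
  | pred k ih => rw [hstep (-k - 1)]; simpa using ih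

lemma my_marginal_memℒp (hmeas : ∀ n, Measurable (ξ n)) (hstat : IsStationaryZ μ ξ)
    {f : S → ℝ} (hf : Measurable f) (hL2 : MemLp (fun ω => f (ξ 0 ω)) 2 μ) (i : ℤ) :
    MemLp (fun ω => f (ξ i ω)) 2 μ := by
  have h0 : MemLp f 2 (Measure.map (ξ 0) μ) :=
    (memLp_map_measure_iff hf.aestronglyMeasurable (hmeas 0).aemeasurable).mpr hL2
  have hi : MemLp f 2 (Measure.map (ξ i) μ) := by
    rw [my_marginal_map_eq hmeas hstat i]; exact h0
  exact (memLp_map_measure_iff hf.aestronglyMeasurable (hmeas i).aemeasurable).mp hi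

/-- Stationarity: the shifted block has the same conditional L²-norm as the initial block. -/
lemma my_stat_eLpNorm_eq (hmeas : ∀ n, Measurable (ξ n)) (hstat : IsStationaryZ μ ξ)
    {f : S → ℝ} (hf : Measurable f) (hL2 : MemLp (fun ω => f (ξ 0 ω)) 2 μ) (n m : ℕ) :
    eLpNorm (μ[fun ω => ∑ i ∈ Finset.Icc 1 m, f (ξ ((i:ℤ) + (n:ℤ)) ω) |
        MeasurableSpace.comap (ξ ((n + m : ℕ) : ℤ)) inferInstance]) 2 μ
      = eLpNorm (μ[pS ξ f m | MeasurableSpace.comap (ξ ((m : ℕ) : ℤ)) inferInstance]) 2 μ := by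
  have hΦ := my_path_measurable hmeas
  have hT : Measurable (shiftZ (S := S)^[n]) := my_shiftZ_measurable.iterate n
  have hψ : Measurable (fun ω => (shiftZ (S := S)^[n]) (fun k : ℤ => ξ k ω)) := hT.comp hΦ
  have hpres := (my_shift_measurePreserving hmeas hstat).iterate n
  have hmapψ : Measure.map (fun ω => (shiftZ (S := S)^[n]) (fun k : ℤ => ξ k ω)) μ
      = Measure.map (fun ω (k : ℤ) => ξ k ω) μ := by
    rw [show (fun ω => (shiftZ (S := S)^[n]) (fun k : ℤ => ξ k ω))
        = (shiftZ (S := S)^[n]) ∘ (fun ω (k : ℤ) => ξ k ω) from rfl,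
      ← Measure.map_map hT hΦ, hpres.map_eq]
  set G : (ℤ → S) → ℝ := fun x => ∑ i ∈ Finset.Icc 1 m, f (x (i : ℤ)) with hG_def
  have hG : Measurable G := Finset.measurable_sum _ fun i _ => hf.comp (measurable_pi_apply _)
  have h𝒢 : MeasurableSpace.comap (fun x : ℤ → S => x ((m : ℕ) : ℤ)) inferInstance
      ≤ MeasurableSpace.pi := (measurable_pi_apply _).comap_le
  have hpSm_int : Integrable (pS ξ f m) μ := by
    refine integrable_finset_sum _ fun i _ => ?_
    exact (my_marginal_memℒp hmeas hstat hf hL2 (i : ℤ)).integrable one_le_two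
  have hGint : Integrable G (Measure.map (fun ω (k : ℤ) => ξ k ω) μ) :=
    (integrable_map_measure hG.aestronglyMeasurable hΦ.aemeasurable).mpr hpSm_int
  have hσ₂ : MeasurableSpace.comap (ξ ((n + m : ℕ) : ℤ)) inferInstance
      = (MeasurableSpace.comap (fun x : ℤ → S => x ((m : ℕ) : ℤ)) inferInstance).comap
          (fun ω => (shiftZ (S := S)^[n]) (fun k : ℤ => ξ k ω)) := by
    rw [MeasurableSpace.comap_comp]
    congr 1
    funext ω
    show ξ _ ω = (shiftZ (S := S)^[n]) (fun k : ℤ => ξ k ω) ((m : ℕ) : ℤ)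
    rw [my_shiftZ_iterate_apply]
    congr 1
    push_cast
    ring
  have hσ₁ : MeasurableSpace.comap (ξ ((m : ℕ) : ℤ)) inferInstance
      = (MeasurableSpace.comap (fun x : ℤ → S => x ((m : ℕ) : ℤ)) inferInstance).comap
          (fun ω (k : ℤ) => ξ k ω) := by
    rw [MeasurableSpace.comap_comp]; rfl
  have hfun₂ : (fun ω => ∑ i ∈ Finset.Icc 1 m, f (ξ ((i:ℤ) + (n:ℤ)) ω))
      = fun ω => G ((shiftZ (S := S)^[n]) (fun k : ℤ => ξ k ω)) := by
    funext ω
    rw [hG_def]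
    exact Finset.sum_congr rfl fun i _ => by rw [my_shiftZ_iterate_apply]
  have hfun₁ : pS ξ f m = fun ω => G (fun k : ℤ => ξ k ω) := rfl
  rw [hσ₂, hσ₁, hfun₂, hfun₁]
  have e₂ := my_eLpNorm_condexp_map (μ := μ) hψ h𝒢 (g := G) (by rw [hmapψ]; exact hGint)
  have e₁ := my_eLpNorm_condexp_map (μ := μ) hΦ h𝒢 (g := G) hGint
  rw [e₂, e₁, hmapψ]

end Aux

theorem stmt12 {Ω S : Type*} [MeasurableSpace Ω] [MeasurableSpace S]
    (μ : Measure Ω) [IsProbabilityMeasure μ] (ξ : ℤ → Ω → S)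
    (hmeas : ∀ n, Measurable (ξ n))
    (hstat : IsStationaryZ μ ξ) (hmarkov : IsMarkovChain μ ξ)
    (f : S → ℝ) (hf : Measurable f)
    (hmean : ∫ ω, f (ξ 0 ω) ∂μ = 0)
    (hL2 : MemLp (fun ω => f (ξ 0 ω)) 2 μ) :
    ∀ m n : ℕ, 1 ≤ m → 1 ≤ n →
      eLpNorm (μ[pS ξ f (n + m) | MeasurableSpace.comap (ξ (n + m)) inferInstance]) 2 μ ≤
        eLpNorm (μ[pS ξ f n | MeasurableSpace.comap (ξ n) inferInstance]) 2 μ +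
          eLpNorm (μ[pS ξ f m | MeasurableSpace.comap (ξ m) inferInstance]) 2 μ := by
  intro m n hm hn
  -- the shifted block
  set Δ : Ω → ℝ := fun ω => ∑ i ∈ Finset.Icc 1 m, f (ξ ((i:ℤ) + (n:ℤ)) ω) with hΔ_def
  have hmemℒp : ∀ i : ℤ, MemLp (fun ω => f (ξ i ω)) 2 μ :=
    my_marginal_memℒp hmeas hstat hf hL2
  have hpS_memℒp : ∀ k : ℕ, MemLp (pS ξ f k) 2 μ := fun k =>
    memLp_finset_sum _ fun i _ => hmemℒp (i : ℤ)
  have hpSn_int : Integrable (pS ξ f n) μ := (hpS_memℒp n).integrable one_le_two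
  have hΔ_int : Integrable Δ μ :=
    integrable_finset_sum _ fun i _ => (hmemℒp ((i:ℤ) + (n:ℤ))).integrable one_le_two
  have hm₂_le : MeasurableSpace.comap (ξ ((n + m : ℕ) : ℤ)) inferInstance ≤ _ :=
    (hmeas ((n + m : ℕ) : ℤ)).comap_le
  have hm₁_le : MeasurableSpace.comap (ξ ((n : ℕ) : ℤ)) inferInstance ≤ _ :=
    (hmeas ((n : ℕ) : ℤ)).comap_le
  -- splitting of the partial sums
  have hsplit : pS ξ f (n + m) = pS ξ f n + Δ := by
    funext ω
    have hIcc : ∀ k : ℕ, Finset.Icc 1 k = Finset.Ioc 0 k := fun k => by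
      ext x; simp only [Finset.mem_Icc, Finset.mem_Ioc]; omega
    have hmap : Finset.Ioc n (n + m) = (Finset.Ioc 0 m).map (addRightEmbedding n) := by
      rw [Finset.map_add_right_Ioc, Nat.zero_add, Nat.add_comm m n]
    show (∑ i ∈ Finset.Icc 1 (n + m), f (ξ (i : ℤ) ω))
        = (∑ i ∈ Finset.Icc 1 n, f (ξ (i : ℤ) ω)) + Δ ω
    rw [hΔ_def, hIcc, hIcc,
      ← Finset.sum_Ioc_consecutive (fun i : ℕ => f (ξ (i : ℤ) ω)) (Nat.zero_le n)
        (Nat.le_add_right n m), hmap, Finset.sum_map]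
    congr 1
  -- past-measurability of `pS ξ f n`
  have hpSn_meas : StronglyMeasurable[sigmaOf ξ {k | k ≤ (n : ℤ)}] (pS ξ f n) := by
    have : Measurable[sigmaOf ξ {k | k ≤ (n : ℤ)}] (pS ξ f n) := by
      refine Finset.measurable_sum _ fun i hi => ?_
      refine hf.comp (Measurable.of_comap_le (my_comap_le_sigmaOf ?_))
      have h2 := (Finset.mem_Icc.mp hi).2
      show (i : ℤ) ≤ (n : ℤ)
      exact_mod_cast h2
    exact this.stronglyMeasurable
  -- conditional expectation of the sum
  have hadd : μ[pS ξ f (n + m) | MeasurableSpace.comap (ξ ((n + m : ℕ) : ℤ)) inferInstance]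
      =ᵐ[μ] μ[pS ξ f n | MeasurableSpace.comap (ξ ((n + m : ℕ) : ℤ)) inferInstance]
        + μ[Δ | MeasurableSpace.comap (ξ ((n + m : ℕ) : ℤ)) inferInstance] := by
    rw [hsplit]
    exact condExp_add hpSn_int hΔ_int _
  have htower := my_markov_condexp_tower hmeas hmarkov ((n : ℕ) : ℤ) ((n + m : ℕ) : ℤ)
    (by exact_mod_cast Nat.le_add_right n m) hpSn_int hpSn_meas
  calc eLpNorm (μ[pS ξ f (n + m) | MeasurableSpace.comap (ξ ((n + m : ℕ) : ℤ)) inferInstance]) 2 μ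
      = eLpNorm (μ[pS ξ f n | MeasurableSpace.comap (ξ ((n + m : ℕ) : ℤ)) inferInstance]
          + μ[Δ | MeasurableSpace.comap (ξ ((n + m : ℕ) : ℤ)) inferInstance]) 2 μ :=
        eLpNorm_congr_ae hadd
    _ ≤ eLpNorm (μ[pS ξ f n | MeasurableSpace.comap (ξ ((n + m : ℕ) : ℤ)) inferInstance]) 2 μ
          + eLpNorm (μ[Δ | MeasurableSpace.comap (ξ ((n + m : ℕ) : ℤ)) inferInstance]) 2 μ :=
        eLpNorm_add_le ((stronglyMeasurable_condExp.mono hm₂_le).aestronglyMeasurable)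
          ((stronglyMeasurable_condExp.mono hm₂_le).aestronglyMeasurable) one_le_two
    _ ≤ eLpNorm (μ[pS ξ f n | MeasurableSpace.comap (ξ ((n : ℕ) : ℤ)) inferInstance]) 2 μ
          + eLpNorm (μ[pS ξ f m | MeasurableSpace.comap (ξ ((m : ℕ) : ℤ)) inferInstance]) 2 μ := by
        refine add_le_add ?_ (le_of_eq ?_)
        · rw [eLpNorm_congr_ae htower]
          exact my_eLpNorm_condexp_le hm₂_le (my_memℒp_condexp hm₁_le (hpS_memℒp n))
        · exact my_stat_eLpNorm_eq hmeas hstat hf hL2 n m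

end
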